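/- Let $r \in (0, 1/\sqrt{2}]$, $\phi_2 = \arccos(1 - 4r^2)$, and let $\gamma$ be defined by $\sin\gamma = \frac{1-4r^2}{3-4r^2}$, $\cos\gamma = \frac{2\sqrt{2}\sqrt{1-2r^2}}{3-4r^2}$, and set $\phi_1 = \pi/2 + \gamma$. Then $r(1 - \cos\phi_1)\cos\phi_2 + \sin\phi_1 \sin\phi_2 = 4(1 - 2r^2) r$ and $r \sin\phi_1 \cos\phi_2 + \cos\phi_1 \sin\phi_2 = 0$. -/

import Mathlib

open Real

theorem stmt_10 (r γ φ₁ φ₂ : ℝ)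
    (hr : r ∈ Set.Ioc (0 : ℝ) (1 / Real.sqrt 2))
    (hφ₂ : φ₂ = Real.arccos (1 - 4 * r ^ 2))
    (hsinγ : Real.sin γ = (1 - 4 * r ^ 2) / (3 - 4 * r ^ 2))
    (hcosγ : Real.cos γ = 2 * Real.sqrt 2 * Real.sqrt (1 - 2 * r ^ 2) / (3 - 4 * r ^ 2))
    (hφ₁ : φ₁ = Real.pi / 2 + γ) :
    r * (1 - Real.cos φ₁) * Real.cos φ₂ + Real.sin φ₁ * Real.sin φ₂ =
      4 * (1 - 2 * r ^ 2) * r ∧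
    r * Real.sin φ₁ * Real.cos φ₂ + Real.cos φ₁ * Real.sin φ₂ = 0 := by
  obtain ⟨hr0, hr1⟩ := hr
  have hs2 : Real.sqrt 2 > 0 := by positivity
  have hrle : r ^ 2 ≤ 1 / 2 := by
    have : r ^ 2 ≤ (1 / Real.sqrt 2) ^ 2 := by
      apply pow_le_pow_left₀ hr0.le hr1
    calc r ^ 2 ≤ (1 / Real.sqrt 2) ^ 2 := this
      _ = 1 / 2 := by rw [div_pow, one_pow, Real.sq_sqrt (by norm_num : (2:ℝ) ≥ 0)]
  have h2r : (0:ℝ) ≤ 1 - 2 * r ^ 2 := by linarith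
  have hD : (3 - 4 * r ^ 2) > 0 := by nlinarith
  have hss : Real.sqrt (1 - 2 * r ^ 2) ^ 2 = 1 - 2 * r ^ 2 := Real.sq_sqrt h2r
  have hs2sq : Real.sqrt 2 ^ 2 = 2 := Real.sq_sqrt (by norm_num)
  have hcos2 : Real.cos φ₂ = 1 - 4 * r ^ 2 := by
    rw [hφ₂, Real.cos_arccos (by nlinarith) (by nlinarith)]
  have hsin2 : Real.sin φ₂ = 2 * Real.sqrt 2 * r * Real.sqrt (1 - 2 * r ^ 2) := by
    rw [hφ₂, Real.sin_arccos]
    rw [show 1 - (1 - 4 * r ^ 2) ^ 2 = (2 * Real.sqrt 2 * r * Real.sqrt (1 - 2 * r ^ 2)) ^ 2 by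
      linear_combination (-4 * r ^ 2 * Real.sqrt (1 - 2 * r ^ 2) ^ 2) * hs2sq - 8 * r ^ 2 * hss]
    exact Real.sqrt_sq (by positivity)
  have hcos1 : Real.cos φ₁ = -((1 - 4 * r ^ 2) / (3 - 4 * r ^ 2)) := by
    rw [hφ₁, Real.cos_add, Real.cos_pi_div_two, Real.sin_pi_div_two, hsinγ]; ring
  have hsin1 : Real.sin φ₁ = 2 * Real.sqrt 2 * Real.sqrt (1 - 2 * r ^ 2) / (3 - 4 * r ^ 2) := by
    rw [hφ₁, Real.sin_add, Real.cos_pi_div_two, Real.sin_pi_div_two, hcosγ]; ring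
  rw [hcos1, hsin1, hcos2, hsin2]
  constructor
  · field_simp
    have hD' : (3 - r ^ 2 * 4) ≠ 0 := by nlinarith
    rw [show (1 - r ^ 2 * 2) = 1 - 2 * r ^ 2 by ring, hss, hs2sq]
    field_simp
    ring
  · field_simp
    ring
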